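/- arXiv:2507.14589 — 2 statements merged into one kernel-verified Lean document; each statement's English description precedes it below -/
import Mathlib

section
/- Let A, X₁, X₂, X₃ be pairwise commuting bounded operators on a complex Hilbert space such that ‖p(A, X₁, X₂, X₃)‖ ≤ sup_{w ∈ ℍ̄} |p(w)| for every polynomial p ∈ ℂ[z₀, z₁, z₂, z₃] (an ℍ-contraction). Then: (1) ‖q(A, X₁)‖ ≤ sup_{w ∈ 𝔹̄₂} |q(w)| and ‖q(A, X₂)‖ ≤ sup_{w ∈ 𝔹̄₂} |q(w)| for every polynomial q ∈ ℂ[z, w]; (2) ‖q(X₁, X₂, X₃)‖ ≤ sup_{x ∈ 𝔼̄} |q(x)| for every polynomial q ∈ ℂ[z₁, z₂, z₃]; (3) ‖q(A, X₁ + X₂, X₃)‖ ≤ sup_{w ∈ ℙ̄} |q(w)| for every polynomial q ∈ ℂ[z₀, z₁, z₂]. -/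
noncomputable section

open Complex

/-- The closed tetrablock `𝔼̄ ⊆ ℂ³`. -/
def closedTetrablock : Set (ℂ × ℂ × ℂ) :=
  {x | ‖x.1‖ ≤ 1 ∧
    0 ≤ 1 + ‖x.1‖ ^ 2 - ‖x.2.1‖ ^ 2 - ‖x.2.2‖ ^ 2
      - 2 * ‖x.1 - (starRingEnd ℂ) x.2.1 * x.2.2‖}

/-- The closed hexablock `ℍ̄ ⊆ ℂ⁴`. -/
def closedHexablock : Set (ℂ × ℂ × ℂ × ℂ) :=
  {w | (w.2.1, w.2.2.1, w.2.2.2) ∈ closedTetrablock ∧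
    ∀ z₁ z₂ : ℂ, ‖z₁‖ < 1 → ‖z₂‖ < 1 →
      ‖w.1‖ * Real.sqrt ((1 - ‖z₁‖ ^ 2) * (1 - ‖z₂‖ ^ 2)) ≤
        ‖1 - w.2.1 * z₁ - w.2.2.1 * z₂ + w.2.2.2 * z₁ * z₂‖}

/-- `sup_{w ∈ ℍ̄} |p(w)|` for a polynomial `p` in four variables. -/
def hexPolySup (p : MvPolynomial (Fin 4) ℂ) : ℝ :=
  sSup ((fun w : ℂ × ℂ × ℂ × ℂ =>
    ‖MvPolynomial.eval ![w.1, w.2.1, w.2.2.1, w.2.2.2] p‖) '' closedHexablock)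

/-- `sup_{x ∈ 𝔼̄} |q(x)|` for a polynomial `q` in three variables. -/
def tetraPolySup (q : MvPolynomial (Fin 3) ℂ) : ℝ :=
  sSup ((fun x : ℂ × ℂ × ℂ =>
    ‖MvPolynomial.eval ![x.1, x.2.1, x.2.2] q‖) '' closedTetrablock)

variable {H : Type*} [NormedAddCommGroup H] [InnerProductSpace ℂ H] [CompleteSpace H]

/-- Evaluation of a four-variable polynomial at a commuting quadruple of
operators. -/
def evalOp4 (T₀ T₁ T₂ T₃ : H →L[ℂ] H) (p : MvPolynomial (Fin 4) ℂ) : H →L[ℂ] H :=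
  p.support.sum fun s =>
    MvPolynomial.coeff s p • (T₀ ^ s 0 * T₁ ^ s 1 * T₂ ^ s 2 * T₃ ^ s 3)

/-- Evaluation of a three-variable polynomial at a commuting triple of
operators. -/
def evalOp3 (T₁ T₂ T₃ : H →L[ℂ] H) (q : MvPolynomial (Fin 3) ℂ) : H →L[ℂ] H :=
  q.support.sum fun s =>
    MvPolynomial.coeff s q • (T₁ ^ s 0 * T₂ ^ s 1 * T₃ ^ s 2)

/-- The closed Euclidean unit ball `𝔹̄₂ ⊆ ℂ²`. -/
def closedBiball : Set (ℂ × ℂ) :=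
  {z | ‖z.1‖ ^ 2 + ‖z.2‖ ^ 2 ≤ 1}

/-- `sup_{w ∈ 𝔹̄₂} |q(w)|` for a polynomial `q` in two variables. -/
def biballPolySup (q : MvPolynomial (Fin 2) ℂ) : ℝ :=
  sSup ((fun z : ℂ × ℂ =>
    ‖MvPolynomial.eval ![z.1, z.2] q‖) '' closedBiball)

/-- The closed pentablock `ℙ̄ ⊆ ℂ³`. -/
def closedPentablock : Set (ℂ × ℂ × ℂ) :=
  {w | ∃ b : Matrix (Fin 2) (Fin 2) ℂ, ‖Matrix.toEuclideanCLM (𝕜 := ℂ) b‖ ≤ 1 ∧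
    w = (b 1 0, b 0 0 + b 1 1, b 0 0 * b 1 1 - b 0 1 * b 1 0)}

/-- `sup_{w ∈ ℙ̄} |q(w)|` for a polynomial `q` in three variables. -/
def pentaPolySup (q : MvPolynomial (Fin 3) ℂ) : ℝ :=
  sSup ((fun w : ℂ × ℂ × ℂ =>
    ‖MvPolynomial.eval ![w.1, w.2.1, w.2.2] q‖) '' closedPentablock)

/-- Evaluation of a two-variable polynomial at a commuting pair of
operators. -/
def evalOp2 (T₀ T₁ : H →L[ℂ] H) (q : MvPolynomial (Fin 2) ℂ) : H →L[ℂ] H :=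
  q.support.sum fun s => MvPolynomial.coeff s q • (T₀ ^ s 0 * T₁ ^ s 1)

/-! ### Compatibility: `Complex.abs` as the norm -/

namespace Complex

/-- The complex absolute value, as an absolute value given by the norm. -/
def abs : AbsoluteValue ℂ ℝ where
  toFun z := ‖z‖
  map_mul' := norm_mul
  nonneg' := norm_nonneg
  eq_zero' _ := norm_eq_zero
  add_le' := norm_add_le

lemma norm_eq_abs (z : ℂ) : ‖z‖ = Complex.abs z := rfl

lemma abs_apply (z : ℂ) : Complex.abs z = Real.sqrt (normSq z) := Complex.norm_def z

lemma sq_abs (z : ℂ) : Complex.abs z ^ 2 = normSq z := Complex.sq_norm z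

lemma abs_conj (z : ℂ) : Complex.abs ((starRingEnd ℂ) z) = Complex.abs z := Complex.norm_conj z

lemma abs_ofReal (r : ℝ) : Complex.abs (r : ℂ) = |r| := Complex.norm_real r

lemma re_le_abs (z : ℂ) : z.re ≤ Complex.abs z := Complex.re_le_norm z

lemma continuous_abs : Continuous Complex.abs := continuous_norm

lemma abs.map_prod {ι : Type*} (s : Finset ι) (f : ι → ℂ) :
    Complex.abs (∏ i ∈ s, f i) = ∏ i ∈ s, Complex.abs (f i) := norm_prod s f

end Complex

/-! ### Auxiliary lemmas -/

section Aux

open ComplexConjugate MvPolynomial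

lemma key_identity' (p q r s : ℂ) :
    (1 - normSq p - normSq r) * (1 - normSq q - normSq s) - normSq (p * conj q + r * conj s)
      = 1 - (normSq p + normSq q + normSq r + normSq s) + normSq (p*s - q*r) := by
  simp only [Complex.normSq_apply, Complex.add_re, Complex.add_im, Complex.mul_re, Complex.mul_im,
    Complex.sub_re, Complex.sub_im, Complex.conj_re, Complex.conj_im]
  ring

lemma cross_identity' (p q r s v w : ℂ) :
    normSq v + normSq w - normSq (p*v + q*w) - normSq (r*v + s*w)
      = (1 - normSq p - normSq r) * normSq v + (1 - normSq q - normSq s) * normSq w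
        - 2 * ((p * conj q + r * conj s) * (v * conj w)).re := by
  simp only [Complex.normSq_apply, Complex.add_re, Complex.add_im, Complex.mul_re, Complex.mul_im,
    Complex.sub_re, Complex.sub_im, Complex.conj_re, Complex.conj_im, Complex.one_re,
    Complex.one_im]
  ring

lemma scalar_contraction (p q r s v w : ℂ)
    (hT1 : normSq p + normSq q + normSq r + normSq s ≤ 1 + normSq (p*s - q*r))
    (hT2 : normSq p + normSq q + normSq r + normSq s ≤ 2) :
    normSq (p*v + q*w) + normSq (r*v + s*w) ≤ normSq v + normSq w := by
  set α := 1 - normSq p - normSq r with hα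
  set β := 1 - normSq q - normSq s with hβ
  set γ := p * conj q + r * conj s with hγ
  have hdet : normSq γ ≤ α * β := by
    have := key_identity' p q r s
    rw [← hα, ← hβ, ← hγ] at this
    nlinarith [this]
  have hsum : 0 ≤ α + β := by simp only [hα, hβ]; linarith
  have hγ0 : 0 ≤ normSq γ := normSq_nonneg γ
  have hαβ : 0 ≤ α * β := le_trans hγ0 hdet
  have hα0 : 0 ≤ α := by nlinarith
  have hβ0 : 0 ≤ β := by nlinarith
  have hRe : ((γ : ℂ) * (v * conj w)).re ≤ Complex.abs γ * (Complex.abs v * Complex.abs w) := by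
    calc (γ * (v * conj w)).re ≤ Complex.abs (γ * (v * conj w)) := Complex.re_le_abs _
    _ = Complex.abs γ * (Complex.abs v * Complex.abs w) := by
        simp [map_mul, Complex.abs_conj]
  have habsγ : Complex.abs γ ≤ Real.sqrt α * Real.sqrt β := by
    rw [Complex.abs_apply, ← Real.sqrt_mul hα0]
    exact Real.sqrt_le_sqrt hdet
  have hcross := cross_identity' p q r s v w
  rw [← hα, ← hβ, ← hγ] at hcross
  have h1 : Complex.abs v ^ 2 = normSq v := Complex.sq_abs v
  have h2 : Complex.abs w ^ 2 = normSq w := Complex.sq_abs w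
  nlinarith [sq_nonneg (Real.sqrt α * Complex.abs v - Real.sqrt β * Complex.abs w),
    Real.sq_sqrt hα0, Real.sq_sqrt hβ0, Real.sqrt_nonneg α, Real.sqrt_nonneg β,
    Complex.abs.nonneg v, Complex.abs.nonneg w,
    mul_nonneg (Complex.abs.nonneg v) (Complex.abs.nonneg w), hcross, hRe,
    mul_le_mul_of_nonneg_right habsγ (mul_nonneg (Complex.abs.nonneg v) (Complex.abs.nonneg w))]

lemma matrix_norm_le (p q r s : ℂ)
    (hT1 : normSq p + normSq q + normSq r + normSq s ≤ 1 + normSq (p*s - q*r))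
    (hT2 : normSq p + normSq q + normSq r + normSq s ≤ 2) :
    ‖Matrix.toEuclideanCLM (𝕜 := ℂ) !![p, q; r, s]‖ ≤ 1 := by
  apply ContinuousLinearMap.opNorm_le_bound _ zero_le_one
  intro v
  rw [one_mul]
  have hv : ∀ x : EuclideanSpace ℂ (Fin 2), ‖x‖ = Real.sqrt (normSq (x 0) + normSq (x 1)) := by
    intro x
    rw [EuclideanSpace.norm_eq, Fin.sum_univ_two]
    simp [Complex.norm_eq_abs, Complex.sq_abs]
  have happ : ∀ i, (Matrix.toEuclideanCLM (𝕜 := ℂ) !![p, q; r, s]) v i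
      = (Matrix.of ![![p,q],![r,s]]).mulVec v i := fun i => rfl
  rw [hv, hv]
  apply Real.sqrt_le_sqrt
  have h0 := happ 0
  have h1 := happ 1
  simp only [Matrix.mulVec, dotProduct, Fin.sum_univ_two, Matrix.of_apply,
    Matrix.cons_val', Matrix.cons_val_zero, Matrix.cons_val_one, Matrix.head_cons,
    Matrix.empty_val', Matrix.cons_val_fin_one, Matrix.head_fin_const] at h0 h1
  rw [h0, h1]
  exact scalar_contraction p q r s (v 0) (v 1) hT1 hT2

lemma entry_bound (b : Matrix (Fin 2) (Fin 2) ℂ)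
    (hb : ‖Matrix.toEuclideanCLM (𝕜 := ℂ) b‖ ≤ 1) (i j : Fin 2) :
    Complex.abs (b i j) ≤ 1 := by
  set v : EuclideanSpace ℂ (Fin 2) := EuclideanSpace.single j 1 with hv
  have h1 : ‖(Matrix.toEuclideanCLM (𝕜 := ℂ) b) v‖ ≤ 1 := by
    calc ‖(Matrix.toEuclideanCLM (𝕜 := ℂ) b) v‖ ≤ ‖Matrix.toEuclideanCLM (𝕜 := ℂ) b‖ * ‖v‖ :=
      ContinuousLinearMap.le_opNorm _ _
    _ ≤ 1 := by
        rw [hv, EuclideanSpace.norm_single, norm_one, mul_one]; exact hb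
  have happ : (Matrix.toEuclideanCLM (𝕜 := ℂ) b) v i = b i j := by
    show b.mulVec v i = b i j
    simp only [Matrix.mulVec, dotProduct, hv, EuclideanSpace.single_apply,
      Fin.sum_univ_two]
    fin_cases j <;> simp
  have h2 : ‖(Matrix.toEuclideanCLM (𝕜 := ℂ) b) v i‖ ≤ ‖(Matrix.toEuclideanCLM (𝕜 := ℂ) b) v‖ := by
    set x := (Matrix.toEuclideanCLM (𝕜 := ℂ) b) v
    rw [EuclideanSpace.norm_eq]
    have : ‖x i‖ ^ 2 ≤ ∑ k, ‖x k‖ ^ 2 :=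
      Finset.single_le_sum (f := fun k => ‖x k‖^2) (fun k _ => sq_nonneg _) (Finset.mem_univ i)
    calc ‖x i‖ = Real.sqrt (‖x i‖^2) := by rw [Real.sqrt_sq (norm_nonneg _)]
    _ ≤ _ := Real.sqrt_le_sqrt this
  rw [happ] at h2
  calc Complex.abs (b i j) = ‖b i j‖ := rfl
  _ ≤ _ := le_trans h2 h1

lemma eval_bound {n : ℕ} (q : MvPolynomial (Fin n) ℂ) (v : Fin n → ℂ)
    (h : ∀ i, Complex.abs (v i) ≤ 2) :
    Complex.abs (eval v q)
      ≤ ∑ d ∈ q.support, Complex.abs (coeff d q) * ∏ i ∈ d.support, (2:ℝ) ^ d i := by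
  rw [eval_eq]
  refine le_trans (Complex.abs.sum_le _ _) (Finset.sum_le_sum fun d _ => ?_)
  rw [map_mul]
  apply mul_le_mul_of_nonneg_left _ (Complex.abs.nonneg _)
  rw [Complex.abs.map_prod]
  apply Finset.prod_le_prod (fun i _ => Complex.abs.nonneg _)
  intro i _
  rw [map_pow]
  exact pow_le_pow_left₀ (Complex.abs.nonneg _) (h i) _

lemma biball_aux (a x : ℂ) (ht1 : Complex.abs x ≤ 1)
    (h : ∀ z : ℂ, Complex.abs z < 1 →
      Complex.abs a * Real.sqrt (1 - Complex.abs z ^ 2) ≤ Complex.abs (1 - x * z)) :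
    Complex.abs a ^ 2 + Complex.abs x ^ 2 ≤ 1 := by
  have hm0 : 0 ≤ Complex.abs a := Complex.abs.nonneg a
  have ht0 : 0 ≤ Complex.abs x := Complex.abs.nonneg x
  rcases lt_or_eq_of_le ht1 with htlt | hteq
  · have hz : Complex.abs (conj x) < 1 := by rwa [Complex.abs_conj]
    have key := h (conj x) hz
    rw [Complex.abs_conj, Complex.mul_conj] at key
    have hnsq : normSq x = Complex.abs x ^ 2 := (Complex.sq_abs x).symm
    have hcast : (1:ℂ) - (normSq x : ℂ) = ((1 - Complex.abs x ^ 2 : ℝ) : ℂ) := by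
      rw [hnsq]; push_cast; ring
    rw [hcast, Complex.abs_ofReal,
      _root_.abs_of_nonneg (by nlinarith : (0:ℝ) ≤ 1 - Complex.abs x ^ 2)] at key
    have hsq : Real.sqrt (1 - Complex.abs x ^ 2) ^ 2 = 1 - Complex.abs x ^ 2 :=
      Real.sq_sqrt (by nlinarith)
    have hspos : 0 < Real.sqrt (1 - Complex.abs x ^ 2) := Real.sqrt_pos.2 (by nlinarith)
    have hms : Complex.abs a ≤ Real.sqrt (1 - Complex.abs x ^ 2) := by
      nlinarith [key, hsq, hspos]
    nlinarith [hms, hspos, hsq]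
  · have hnsq : normSq x = 1 := by
      have := Complex.sq_abs x; rw [hteq] at this; nlinarith [this]
    have hma : Complex.abs a = 0 := by
      by_contra hne
      have hmpos : 0 < Complex.abs a := lt_of_le_of_ne hm0 (Ne.symm hne)
      set m := Complex.abs a with hm
      set r : ℝ := 1 - min (m^2) 1 / 2 with hr
      clear_value r
      have hminpos : 0 < min (m^2) 1 := lt_min (by positivity) one_pos
      have hmin1 : min (m^2) 1 ≤ 1 := min_le_right _ _
      have hminm : min (m^2) 1 ≤ m^2 := min_le_left _ _
      have hr1 : r < 1 := by simp only [hr]; linarith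
      have hr0 : (0:ℝ) ≤ r := by simp only [hr]; linarith
      have habsz : Complex.abs ((r:ℂ) * conj x) = r := by
        rw [map_mul, Complex.abs_ofReal, Complex.abs_conj, hteq, mul_one,
          _root_.abs_of_nonneg hr0]
      have key := h ((r:ℂ) * conj x) (by rw [habsz]; exact hr1)
      rw [habsz] at key
      have hxz : 1 - x * ((r:ℂ) * conj x) = ((1 - r : ℝ) : ℂ) := by
        have e : x * ((r:ℂ) * conj x) = (r:ℂ) * (x * conj x) := by ring
        rw [e, Complex.mul_conj, hnsq]; push_cast; ring
      rw [hxz, Complex.abs_ofReal, _root_.abs_of_nonneg (by linarith : (0:ℝ) ≤ 1 - r)] at key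
      have hsq : Real.sqrt (1 - r^2) ^ 2 = 1 - r^2 := Real.sq_sqrt (by nlinarith)
      have hsnn : 0 ≤ Real.sqrt (1 - r^2) := Real.sqrt_nonneg _
      have hrhalf : (1:ℝ)/2 ≤ r := by simp only [hr]; linarith
      have hpos : 0 < 1 - r := by simp only [hr]; linarith
      have key2 : m^2 * (1 - r^2) ≤ (1-r)^2 := by
        have h2 := mul_le_mul key key (by positivity) (by linarith)
        nlinarith [h2, hsq]
      have key3 : m^2 * (1+r) ≤ 1 - r := by
        have expand : m^2*(1-r^2) = (m^2*(1+r))*(1-r) := by ring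
        rw [expand] at key2
        have := le_of_mul_le_mul_right
          (by nlinarith [key2] : (m^2*(1+r))*(1-r) ≤ (1-r)*(1-r)) hpos
        linarith
      have hX : 1 - r = (m^2 ⊓ 1)/2 := by simp only [hr]; ring
      have hm2 : (0:ℝ) < m^2 := by positivity
      have h5 : m^2 + m^2*(1/2) ≤ m^2*(1+r) := by
        nlinarith [mul_le_mul_of_nonneg_left hrhalf (sq_nonneg m)]
      linarith [hminm, hX, key3, h5, hm2]
    rw [hma, hteq]; norm_num

lemma tetra_real (t1 t2 t3 M N : ℝ)
    (ht10 : 0 ≤ t1) (ht20 : 0 ≤ t2) (ht30 : 0 ≤ t3) (hM0 : 0 ≤ M) (hN0 : 0 ≤ N)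
    (h1 : t1 ≤ 1) (hcond : 2*M ≤ 1 + t1^2 - t2^2 - t3^2)
    (hMl1 : t1 - t2*t3 ≤ M) (hMl2 : t2*t3 - t1 ≤ M)
    (hNsq : N^2 = M^2 + (t2^2 - t1^2)*(1 - t3^2)) :
    t2 ≤ 1 ∧ t3 ≤ 1 ∧ M + N ≤ 1 - t3^2 := by
  have hA : t2 + t3 ≤ 1 + t1 := by nlinarith [hcond, hMl2]
  have hB1 : t2 - t3 ≤ 1 - t1 := by nlinarith [hcond, hMl1]
  have hB2 : t3 - t2 ≤ 1 - t1 := by nlinarith [hcond, hMl1]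
  have ht2le : t2 ≤ 1 := by linarith
  have ht3le : t3 ≤ 1 := by linarith
  have hP0 : 0 ≤ 1 - t3^2 := by nlinarith
  have hPMge : M ≤ 1 - t3^2 := by
    rcases le_or_gt t1 t2 with hc | hc
    · nlinarith [hcond]
    · have hmul : (t1-t2)*(t1+t2) ≤ (1-t3)*(1+t3) :=
        mul_le_mul (by linarith) (by linarith) (by linarith) (by linarith)
      nlinarith [hcond, hmul]
  have hP2M : t2^2 - t1^2 ≤ (1 - t3^2) - 2*M := by linarith
  have hsq : N^2 ≤ ((1 - t3^2) - M)^2 := by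
    rw [hNsq]
    nlinarith [mul_le_mul_of_nonneg_right hP2M hP0]
  have hNle : N ≤ (1 - t3^2) - M := by
    nlinarith [hsq, hN0, hPMge, sq_nonneg (N + ((1 - t3^2) - M))]
  exact ⟨ht2le, ht3le, by linarith⟩

lemma tetra_facts (x1 x2 x3 : ℂ) (h1 : Complex.abs x1 ≤ 1)
    (h2 : 0 ≤ 1 + Complex.abs x1 ^ 2 - Complex.abs x2 ^ 2 - Complex.abs x3 ^ 2
      - 2 * Complex.abs (x1 - conj x2 * x3)) :
    Complex.abs x2 ≤ 1 ∧ Complex.abs x3 ≤ 1 ∧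
      Complex.abs ((x1 + x2) - conj (x1 + x2) * x3) ≤ 1 - Complex.abs x3 ^ 2 := by
  have habs23 : Complex.abs (conj x2 * x3) = Complex.abs x2 * Complex.abs x3 := by
    rw [map_mul, Complex.abs_conj]
  have hMl1 : Complex.abs x1 - Complex.abs x2 * Complex.abs x3
      ≤ Complex.abs (x1 - conj x2 * x3) := by
    rw [← habs23]
    simpa [Complex.norm_eq_abs, Complex.abs_conj] using norm_sub_norm_le x1 (conj x2 * x3)
  have hMl2 : Complex.abs x2 * Complex.abs x3 - Complex.abs x1
      ≤ Complex.abs (x1 - conj x2 * x3) := by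
    rw [← habs23]
    have := abs_norm_sub_norm_le x1 (conj x2 * x3)
    rw [abs_sub_le_iff] at this
    simpa [Complex.norm_eq_abs, Complex.abs_conj] using this.2
  have hidd : normSq (x2 - conj x1 * x3) - normSq (x1 - conj x2 * x3)
      = (normSq x2 - normSq x1) * (1 - normSq x3) := by
    simp only [Complex.normSq_apply, Complex.sub_re, Complex.sub_im, Complex.mul_re,
      Complex.mul_im, Complex.conj_re, Complex.conj_im]
    ring
  have hNsq : Complex.abs (x2 - conj x1 * x3) ^ 2 = Complex.abs (x1 - conj x2 * x3) ^ 2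
      + (Complex.abs x2 ^2 - Complex.abs x1 ^2) * (1 - Complex.abs x3 ^2) := by
    rw [Complex.sq_abs, Complex.sq_abs, Complex.sq_abs, Complex.sq_abs, Complex.sq_abs]
    linarith [hidd]
  obtain ⟨h2le, h3le, hMN⟩ := tetra_real (Complex.abs x1) (Complex.abs x2) (Complex.abs x3)
    (Complex.abs (x1 - conj x2 * x3)) (Complex.abs (x2 - conj x1 * x3))
    (Complex.abs.nonneg _) (Complex.abs.nonneg _) (Complex.abs.nonneg _)
    (Complex.abs.nonneg _) (Complex.abs.nonneg _) h1 (by linarith) hMl1 hMl2 hNsq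
  refine ⟨h2le, h3le, ?_⟩
  have hsplit : (x1 + x2) - conj (x1 + x2) * x3 = (x1 - conj x2 * x3) + (x2 - conj x1 * x3) := by
    rw [map_add]; ring
  calc Complex.abs ((x1 + x2) - conj (x1 + x2) * x3)
      ≤ Complex.abs (x1 - conj x2 * x3) + Complex.abs (x2 - conj x1 * x3) := by
        rw [hsplit]; exact Complex.abs.add_le _ _
  _ ≤ 1 - Complex.abs x3 ^ 2 := hMN

lemma root_in_disc (l mu : ℂ) (hp : Complex.abs l * Complex.abs mu ≤ 1)
    (hs : Complex.abs (l+mu) ≤ 2)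
    (hG : Complex.abs ((l+mu) - conj (l+mu)*(l*mu)) ≤ 1 - (Complex.abs l * Complex.abs mu)^2) :
    Complex.abs l ≤ 1 := by
  by_contra hr
  push_neg at hr
  have hr0 : (0:ℝ) < Complex.abs l := lt_trans one_pos hr
  have hmu0 : (0:ℝ) ≤ Complex.abs mu := Complex.abs.nonneg mu
  have hid : (l+mu) - conj (l+mu)*(l*mu)
      = l*(1 - (normSq mu : ℂ)) + mu*(1 - (normSq l : ℂ)) := by
    rw [map_add]
    rw [show (normSq l : ℂ) = conj l * l from normSq_eq_conj_mul_self,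
        show (normSq mu : ℂ) = conj mu * mu from normSq_eq_conj_mul_self]
    ring
  have hmu1 : Complex.abs mu < 1 := by nlinarith
  have hnl : normSq l = Complex.abs l ^ 2 := (Complex.sq_abs l).symm
  have hnmu : normSq mu = Complex.abs mu ^ 2 := (Complex.sq_abs mu).symm
  have hnl1 : (1:ℝ) < normSq l := by rw [hnl]; nlinarith
  have hnmu1 : normSq mu < 1 := by rw [hnmu]; nlinarith
  have hcast1 : (1:ℂ) - (normSq mu : ℂ) = ((1 - normSq mu : ℝ) : ℂ) := by push_cast; ring
  have hcast2 : (1:ℂ) - (normSq l : ℂ) = ((1 - normSq l : ℝ) : ℂ) := by push_cast; ring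
  have habs1 : Complex.abs (l*(1 - (normSq mu : ℂ))) = Complex.abs l * (1 - normSq mu) := by
    rw [map_mul, hcast1, Complex.abs_ofReal, _root_.abs_of_nonneg (by linarith)]
  have habs2 : Complex.abs (mu*(1 - (normSq l : ℂ))) = Complex.abs mu * (normSq l - 1) := by
    rw [map_mul, hcast2, Complex.abs_ofReal, abs_of_nonpos (by linarith)]
    ring
  rcases lt_or_eq_of_le hp with hlt | heq
  · have hlow : Complex.abs l * (1 - normSq mu) - Complex.abs mu * (normSq l - 1)
        ≤ Complex.abs ((l+mu) - conj (l+mu)*(l*mu)) := by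
      rw [hid, ← habs1, ← habs2]
      have := norm_sub_norm_le (l*(1 - (normSq mu : ℂ))) (-(mu*(1 - (normSq l : ℂ))))
      simpa [Complex.norm_eq_abs, sub_neg_eq_add] using this
    have key : Complex.abs l * (1 - normSq mu) - Complex.abs mu * (normSq l - 1)
        ≤ 1 - (Complex.abs l * Complex.abs mu)^2 := le_trans hlow hG
    rw [hnl, hnmu] at key
    have h1m : 0 < 1 - Complex.abs l * Complex.abs mu := by linarith
    have hfact : (1 - Complex.abs l * Complex.abs mu) * (Complex.abs l + Complex.abs mu)
        ≤ (1 - Complex.abs l * Complex.abs mu) * (1 + Complex.abs l * Complex.abs mu) := by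
      nlinarith [key]
    have hsum : Complex.abs l + Complex.abs mu ≤ 1 + Complex.abs l * Complex.abs mu :=
      le_of_mul_le_mul_left hfact h1m
    nlinarith [mul_pos (sub_pos.2 hr) (sub_pos.2 hmu1)]
  · have hGz : (l+mu) - conj (l+mu)*(l*mu) = 0 := by
      have : Complex.abs ((l+mu) - conj (l+mu)*(l*mu)) ≤ 0 := by
        have h0 : 1 - (Complex.abs l * Complex.abs mu)^2 = 0 := by rw [heq]; norm_num
        rw [h0] at hG
        exact hG
      exact Complex.abs.eq_zero.1 (le_antisymm this (Complex.abs.nonneg _))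
    have eq0 : l*(1 - (normSq mu : ℂ)) = mu*((normSq l : ℂ) - 1) := by
      rw [hid] at hGz
      linear_combination hGz
    have hlmu : (l + mu) * (1 - (normSq mu : ℂ)) = mu * ((normSq l : ℂ) - (normSq mu : ℂ)) := by
      linear_combination eq0
    have habs3 : Complex.abs (l+mu) * (1 - normSq mu)
        = Complex.abs mu * (normSq l - normSq mu) := by
      have := congrArg Complex.abs hlmu
      rw [map_mul, map_mul, hcast1, Complex.abs_ofReal,
        _root_.abs_of_nonneg (by linarith)] at this
      rw [this]
      congr 1
      rw [show (normSq l : ℂ) - (normSq mu : ℂ) = ((normSq l - normSq mu : ℝ) : ℂ) by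
        push_cast; ring,
        Complex.abs_ofReal, _root_.abs_of_nonneg (by linarith)]
    have hkey : Complex.abs mu * (normSq l - normSq mu) ≤ 2 * (1 - normSq mu) := by
      rw [← habs3]
      exact mul_le_mul_of_nonneg_right hs (by linarith)
    rw [hnl, hnmu] at hkey
    have hmr2 : Complex.abs mu * Complex.abs l ^ 2 = Complex.abs l := by
      linear_combination Complex.abs l * heq
    have h2 : Complex.abs mu ^ 2 * Complex.abs l ^ 2 = 1 := by
      linear_combination (Complex.abs l * Complex.abs mu + 1) * heq
    have h2r : Complex.abs mu ^ 2 * Complex.abs l ^ 3 = Complex.abs l := by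
      linear_combination Complex.abs l * h2
    have h3 : Complex.abs mu ^ 3 * Complex.abs l ^ 3 = 1 := by
      linear_combination (Complex.abs l ^2 * Complex.abs mu ^2
        + Complex.abs l * Complex.abs mu + 1) * heq
    have hkey' : Complex.abs l - Complex.abs mu ^ 3 ≤ 2 - 2 * Complex.abs mu ^ 2 := by
      nlinarith [hkey, hmr2]
    have hr3 : (0:ℝ) < Complex.abs l ^ 3 := by positivity
    have hcube : (0:ℝ) < (Complex.abs l - 1)^3 * (Complex.abs l + 1) := by
      apply mul_pos _ (by linarith)
      have : (0:ℝ) < Complex.abs l - 1 := by linarith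
      positivity
    nlinarith [hkey', h2r, h3, hr3, hcube]

set_option maxHeartbeats 1000000 in
lemma key_interior (l1 l2 : ℂ) (h1 : Complex.abs l1 < 1) (h2 : Complex.abs l2 < 1) (m : ℝ)
    (H : ∀ z : ℂ, Complex.abs z < 1 →
      m * (1 - Complex.abs z^2) ≤ Complex.abs ((1 - l1*z)*(1 - l2*z))) :
    2*m ≤ Complex.abs (1 - l1 * conj l2)
      + Real.sqrt ((1 - Complex.abs l1^2)*(1 - Complex.abs l2^2)) := by
  have ha1 : 0 < 1 - normSq l1 := by
    rw [← Complex.sq_abs]; nlinarith [Complex.abs.nonneg l1]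
  have ha2 : 0 < 1 - normSq l2 := by
    rw [← Complex.sq_abs]; nlinarith [Complex.abs.nonneg l2]
  obtain ⟨u, hu_def⟩ : ∃ u : ℂ, u = 1 - l1 * conj l2 := ⟨_, rfl⟩
  obtain ⟨k, hk_def⟩ : ∃ k : ℝ, k = Complex.abs u := ⟨_, rfl⟩
  obtain ⟨g, hg_def⟩ : ∃ g : ℝ,
    g = Real.sqrt ((1 - Complex.abs l1^2)*(1 - Complex.abs l2^2)) := ⟨_, rfl⟩
  obtain ⟨q2, hq2_def⟩ : ∃ q : ℝ, q = normSq (l1 - l2) := ⟨_, rfl⟩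
  have hq20 : 0 ≤ q2 := hq2_def ▸ normSq_nonneg _
  have hgsq : g^2 = (1 - normSq l1) * (1 - normSq l2) := by
    rw [hg_def, Real.sq_sqrt (by nlinarith [Complex.sq_abs l1, Complex.sq_abs l2])]
    rw [Complex.sq_abs, Complex.sq_abs]
  have hg0 : 0 < g := by
    rw [hg_def]
    apply Real.sqrt_pos.2
    rw [Complex.sq_abs, Complex.sq_abs]
    exact mul_pos ha1 ha2
  have hknsq : normSq u = (1 - normSq l1) * (1 - normSq l2) + q2 := by
    rw [hu_def, hq2_def]
    simp only [Complex.normSq_apply, Complex.sub_re, Complex.sub_im, Complex.mul_re,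
      Complex.mul_im, Complex.conj_re, Complex.conj_im, Complex.one_re, Complex.one_im]
    ring
  have hksq : k^2 = normSq u := by rw [hk_def]; exact Complex.sq_abs u
  have hk2 : k^2 = g^2 + q2 := by rw [hksq, hknsq, hgsq]
  have hknn : 0 ≤ k := hk_def ▸ Complex.abs.nonneg u
  have hk0 : 0 < k := by nlinarith [mul_pos ha1 ha2]
  have hkg : g ≤ k := by nlinarith
  have hkgpos : 0 < k + g := by linarith
  have hu0 : u ≠ 0 := by
    intro h
    rw [h] at hk_def; simp at hk_def
    rw [hk_def] at hk0; exact lt_irrefl _ hk0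
  obtain ⟨c, hc_def⟩ : ∃ c : ℝ, c = k / (k + g) := ⟨_, rfl⟩
  obtain ⟨w, hw_def⟩ : ∃ w : ℂ, w = (c:ℂ) * conj (l1 - l2) / u := ⟨_, rfl⟩
  have hwu : w * u = (c:ℂ) * conj (l1 - l2) := by rw [hw_def]; exact div_mul_cancel₀ _ hu0
  have hnsqw : normSq w = (k - g)/(k + g) := by
    rw [hw_def, normSq_div, normSq_mul, normSq_conj, Complex.normSq_ofReal, ← hq2_def, ← hksq]
    rw [hc_def]
    have hh : q2 = k^2 - g^2 := by linarith [hk2]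
    rw [hh]
    field_simp
    ring
  have hnsqw1 : normSq w < 1 := by
    rw [hnsqw, div_lt_one hkgpos]; linarith
  have hnsqwnn : 0 ≤ normSq w := normSq_nonneg w
  have habsw : Complex.abs w < 1 := by
    have := Complex.sq_abs w
    nlinarith [Complex.abs.nonneg w]
  have hl1w : 1 - l1 * w ≠ 0 := by
    intro h
    have h1' : l1 * w = 1 := by linear_combination -h
    have habs : Complex.abs (l1 * w) = 1 := by rw [h1']; simp
    rw [map_mul] at habs
    nlinarith [Complex.abs.nonneg l1, Complex.abs.nonneg w]
  have hnsqB : 0 < normSq (1 - l1*w) := normSq_pos.2 hl1w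
  obtain ⟨z0, hz0_def⟩ : ∃ z : ℂ, z = (conj l1 - w)/(1 - l1*w) := ⟨_, rfl⟩
  have hz0mul : z0 * (1 - l1*w) = conj l1 - w := by rw [hz0_def]; exact div_mul_cancel₀ _ hl1w
  have idA : normSq (1 - l1*w) - normSq (conj l1 - w) = (1 - normSq l1)*(1 - normSq w) := by
    simp only [Complex.normSq_apply, Complex.sub_re, Complex.sub_im, Complex.mul_re,
      Complex.mul_im, Complex.conj_re, Complex.conj_im, Complex.one_re, Complex.one_im]
    ring
  have hnsqz0 : normSq z0 * normSq (1 - l1*w) = normSq (conj l1 - w) := by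
    rw [hz0_def, normSq_div]
    rw [div_mul_cancel₀ _ (normSq_pos.2 hl1w).ne']
  have hz0lt : normSq z0 < 1 := by
    nlinarith [hnsqz0, idA, mul_pos ha1 (by linarith : (0:ℝ) < 1 - normSq w), hnsqB]
  have habsz0 : Complex.abs z0 < 1 := by
    have := Complex.sq_abs z0
    nlinarith [Complex.abs.nonneg z0]
  have key := H z0 habsz0
  have e1 : (1 - l1*z0) * (1 - l1*w) = 1 - (normSq l1 : ℂ) := by
    calc (1 - l1*z0) * (1 - l1*w) = (1 - l1*w) - l1*(z0*(1-l1*w)) := by ring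
    _ = (1 - l1*w) - l1*(conj l1 - w) := by rw [hz0mul]
    _ = 1 - (normSq l1:ℂ) := by rw [← Complex.mul_conj]; ring
  have hcu : conj u = 1 - conj l1 * l2 := by
    rw [hu_def]; simp [map_sub, map_mul]
  have e2 : (1 - l2*z0) * (1 - l1*w) = 1 - conj l1 * l2 + (l2 - l1)*w := by
    calc (1 - l2*z0) * (1 - l1*w) = (1 - l1*w) - l2*(z0*(1-l1*w)) := by ring
    _ = (1 - l1*w) - l2*(conj l1 - w) := by rw [hz0mul]
    _ = 1 - conj l1 * l2 + (l2 - l1)*w := by ring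
  have e3 : (1 - conj l1 * l2 + (l2 - l1)*w) * u = ((k^2 - c*q2 : ℝ) : ℂ) := by
    calc (1 - conj l1 * l2 + (l2 - l1)*w) * u
        = (1 - conj l1 * l2)*u + (l2-l1)*(w*u) := by ring
    _ = conj u * u + (l2-l1)*((c:ℂ)*conj (l1-l2)) := by rw [hwu, ← hcu]
    _ = (normSq u : ℂ) - (c:ℂ)*((l1-l2)*conj (l1-l2)) := by
        rw [← Complex.normSq_eq_conj_mul_self]; ring
    _ = ((k^2 - c*q2 : ℝ) : ℂ) := by
        rw [Complex.mul_conj, ← hq2_def, ← hksq]; push_cast; ring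
  have hval : k^2 - c*q2 = k*g := by
    rw [hc_def]
    have hh : q2 = k^2 - g^2 := by linarith [hk2]
    rw [hh]
    field_simp
    ring
  have hA1B : Complex.abs (1 - l1*z0) * Complex.abs (1 - l1*w) = 1 - normSq l1 := by
    rw [← map_mul, e1]
    rw [show (1:ℂ) - (normSq l1 : ℂ) = ((1 - normSq l1 : ℝ):ℂ) by push_cast; ring,
      Complex.abs_ofReal, _root_.abs_of_nonneg (by linarith)]
  have hmulid : (1 - l2*z0) * ((1 - l1*w) * u) = ((k^2 - c*q2 : ℝ) : ℂ) := by
    calc (1 - l2*z0) * ((1 - l1*w) * u) = ((1 - l2*z0) * (1 - l1*w)) * u := by ring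
    _ = (1 - conj l1 * l2 + (l2 - l1)*w) * u := by rw [e2]
    _ = _ := e3
  have hA2B' : Complex.abs (1 - l2*z0) * Complex.abs (1 - l1*w) = g := by
    have habs := congrArg Complex.abs hmulid
    rw [map_mul, map_mul, ← hk_def, Complex.abs_ofReal, hval,
      _root_.abs_of_nonneg (by nlinarith)] at habs
    have h2' : (Complex.abs (1 - l2*z0) * Complex.abs (1 - l1*w)) * k = g * k := by
      linear_combination habs
    exact mul_right_cancel₀ (ne_of_gt hk0) h2'
  have hBsq : Complex.abs (1 - l1*w) ^ 2 = normSq (1 - l1*w) := Complex.sq_abs _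
  have hz0expand : (1 - normSq z0) * normSq (1 - l1*w) = (1 - normSq l1)*(1 - normSq w) := by
    have hh : (1 - normSq z0) * normSq (1 - l1*w)
        = normSq (1 - l1*w) - normSq z0 * normSq (1 - l1*w) := by ring
    rw [hh, hnsqz0, idA]
  have habsprod : Complex.abs ((1 - l1*z0)*(1 - l2*z0)) * normSq (1 - l1*w)
      = (1 - normSq l1) * g := by
    rw [map_mul, ← hBsq]
    calc Complex.abs (1 - l1*z0) * Complex.abs (1 - l2*z0) * Complex.abs (1-l1*w)^2
        = (Complex.abs (1 - l1*z0) * Complex.abs (1-l1*w)) *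
          (Complex.abs (1 - l2*z0) * Complex.abs (1-l1*w)) := by ring
    _ = (1 - normSq l1) * g := by rw [hA1B, hA2B']
  rw [Complex.sq_abs] at key
  have step1 : m * ((1 - normSq l1)*(1 - normSq w)) ≤ (1 - normSq l1) * g := by
    calc m * ((1 - normSq l1)*(1 - normSq w)) = m * ((1 - normSq z0) * normSq (1 - l1*w)) := by
          rw [hz0expand]
    _ = (m * (1 - normSq z0)) * normSq (1 - l1*w) := by ring
    _ ≤ Complex.abs ((1 - l1*z0)*(1 - l2*z0)) * normSq (1 - l1*w) :=
        mul_le_mul_of_nonneg_right key (le_of_lt hnsqB)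
    _ = (1 - normSq l1) * g := habsprod
  have step2 : m * (1 - normSq w) ≤ g :=
    le_of_mul_le_mul_left (by linarith [step1]) ha1
  have hnw2 : 1 - normSq w = 2*g/(k+g) := by
    rw [hnsqw]; field_simp; ring
  rw [hnw2] at step2
  rw [← hu_def, ← hk_def, ← hg_def]
  rw [show m * (2*g/(k+g)) = (2*m*g)/(k+g) by ring] at step2
  rw [div_le_iff₀ hkgpos] at step2
  nlinarith [step2, hg0]

lemma key_closed (l1 l2 : ℂ) (h1 : Complex.abs l1 ≤ 1) (h2 : Complex.abs l2 ≤ 1)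
    (m : ℝ) (hm : 0 ≤ m)
    (H : ∀ z : ℂ, Complex.abs z < 1 →
      m * (1 - Complex.abs z^2) ≤ Complex.abs ((1 - l1*z)*(1 - l2*z))) :
    2*m ≤ Complex.abs (1 - l1 * conj l2)
      + Real.sqrt ((1 - Complex.abs l1^2)*(1 - Complex.abs l2^2)) := by
  set G : ℝ → ℝ := fun ρ => Complex.abs (1 - (ρ:ℂ)^2*(l1 * conj l2))
      + Real.sqrt ((1 - ρ^2*Complex.abs l1^2)*(1 - ρ^2*Complex.abs l2^2)) with hG
  have hGcont : Continuous G := by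
    rw [hG]
    apply Continuous.add
    · apply Complex.continuous_abs.comp
      fun_prop
    · apply Real.continuous_sqrt.comp
      fun_prop
  have hev : ∀ ρ : ℝ, ρ ∈ Set.Ioo (0:ℝ) 1 → 2*m ≤ G ρ := by
    intro ρ hρ
    obtain ⟨hρ0, hρ1⟩ := hρ
    have habs1 : Complex.abs ((ρ:ℂ)*l1) < 1 := by
      rw [map_mul, Complex.abs_ofReal, _root_.abs_of_nonneg (le_of_lt hρ0)]
      nlinarith [Complex.abs.nonneg l1]
    have habs2 : Complex.abs ((ρ:ℂ)*l2) < 1 := by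
      rw [map_mul, Complex.abs_ofReal, _root_.abs_of_nonneg (le_of_lt hρ0)]
      nlinarith [Complex.abs.nonneg l2]
    have H' : ∀ z : ℂ, Complex.abs z < 1 →
        m * (1 - Complex.abs z^2) ≤ Complex.abs ((1 - ((ρ:ℂ)*l1)*z)*(1 - ((ρ:ℂ)*l2)*z)) := by
      intro z hz
      have hρz : Complex.abs ((ρ:ℂ)*z) < 1 := by
        rw [map_mul, Complex.abs_ofReal, _root_.abs_of_nonneg (le_of_lt hρ0)]
        nlinarith [Complex.abs.nonneg z]
      have h := H ((ρ:ℂ)*z) hρz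
      have hle : m * (1 - Complex.abs z^2) ≤ m * (1 - Complex.abs ((ρ:ℂ)*z)^2) := by
        apply mul_le_mul_of_nonneg_left _ hm
        rw [map_mul, Complex.abs_ofReal, _root_.abs_of_nonneg (le_of_lt hρ0)]
        nlinarith [mul_nonneg (by nlinarith : (0:ℝ) ≤ 1 - ρ^2) (sq_nonneg (Complex.abs z))]
      refine le_trans (le_trans hle h) (le_of_eq ?_)
      congr 2 <;> ring
    have hki := key_interior ((ρ:ℂ)*l1) ((ρ:ℂ)*l2) habs1 habs2 m H'
    refine le_trans hki (le_of_eq ?_)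
    rw [hG]
    congr 1
    · congr 1
      rw [map_mul, Complex.conj_ofReal]
      ring
    · congr 1
      rw [map_mul, map_mul, Complex.abs_ofReal, _root_.abs_of_nonneg (le_of_lt hρ0)]
      ring_nf
  have hlim : Filter.Tendsto G (nhdsWithin 1 (Set.Iio 1)) (nhds (G 1)) :=
    (hGcont.tendsto 1).mono_left nhdsWithin_le_nhds
  have hev' : ∀ᶠ ρ in nhdsWithin 1 (Set.Iio 1), 2*m ≤ G ρ := by
    filter_upwards [Ioo_mem_nhdsLT_of_mem
      (show (1:ℝ) ∈ Set.Ioc (0:ℝ) 1 by constructor <;> norm_num)] with ρ hρ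
    exact hev ρ hρ
  have hfin : 2*m ≤ G 1 := ge_of_tendsto hlim hev'
  rw [hG] at hfin
  simpa using hfin

lemma para_half (x y : ℂ) :
    normSq ((x+y)/2) + normSq ((x-y)/2) = (normSq x + normSq y)/2 := by
  have h2 : normSq ((x+y)/2) = normSq (x+y)/4 := by
    rw [normSq_div]; norm_num [Complex.normSq_apply]
  have h3 : normSq ((x-y)/2) = normSq (x-y)/4 := by
    rw [normSq_div]; norm_num [Complex.normSq_apply]
  rw [h2, h3]
  simp only [Complex.normSq_apply, Complex.add_re, Complex.add_im, Complex.sub_re, Complex.sub_im]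
  ring

lemma para_two (x y : ℂ) : normSq (x+y) + normSq (x-y) = 2*(normSq x + normSq y) := by
  simp only [Complex.normSq_apply, Complex.add_re, Complex.add_im, Complex.sub_re, Complex.sub_im]
  ring

lemma hex_identity (l1 l2 : ℂ) :
    normSq (1 - l1 * conj l2) = (1 - normSq l1) * (1 - normSq l2) + normSq (l1 - l2) := by
  simp only [Complex.normSq_apply, Complex.sub_re, Complex.sub_im, Complex.mul_re,
    Complex.mul_im, Complex.conj_re, Complex.conj_im, Complex.one_re, Complex.one_im]
  ring

set_option maxHeartbeats 1000000 in
lemma penta_realize (a s p l1 l2 : ℂ)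
    (hsum : l1 + l2 = s) (hprod : l1 * l2 = p)
    (hl1 : Complex.abs l1 ≤ 1) (hl2 : Complex.abs l2 ≤ 1)
    (H : ∀ z : ℂ, Complex.abs z < 1 →
      Complex.abs a * (1 - Complex.abs z^2) ≤ Complex.abs ((1 - l1*z)*(1 - l2*z))) :
    ∃ b : Matrix (Fin 2) (Fin 2) ℂ, ‖Matrix.toEuclideanCLM (𝕜 := ℂ) b‖ ≤ 1 ∧
      a = b 1 0 ∧ s = b 0 0 + b 1 1 ∧ p = b 0 0 * b 1 1 - b 0 1 * b 1 0 := by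
  have hn1 : normSq l1 ≤ 1 := by rw [← Complex.sq_abs]; nlinarith [Complex.abs.nonneg l1]
  have hn2 : normSq l2 ≤ 1 := by rw [← Complex.sq_abs]; nlinarith [Complex.abs.nonneg l2]
  have hnp : normSq p = normSq l1 * normSq l2 := by rw [← hprod, normSq_mul]
  have hT0 : normSq l1 + normSq l2 ≤ 1 + normSq p := by
    rw [hnp]; nlinarith [mul_nonneg (sub_nonneg.2 hn1) (sub_nonneg.2 hn2)]
  have hp1 : normSq p ≤ 1 := by rw [hnp]; nlinarith [normSq_nonneg l1, normSq_nonneg l2]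
  by_cases ha : a = 0
  · refine ⟨!![l1, 0; 0, l2], ?_, by simp [ha], by simp [← hsum], by simp [← hprod]⟩
    apply matrix_norm_le
    · simp only [normSq_zero]
      rw [show l1*l2 - 0*0 = p by rw [← hprod]; ring]
      linarith [hT0]
    · simp only [normSq_zero]; linarith
  · have hm0 : 0 < Complex.abs a := Complex.abs.pos ha
    obtain ⟨m, hm_def⟩ : ∃ m : ℝ, m = Complex.abs a := ⟨_, rfl⟩
    have hm0' : 0 < m := hm_def ▸ hm0
    have hnA : normSq a = m^2 := by rw [hm_def]; exact (Complex.sq_abs a).symm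
    obtain ⟨D, hD_def⟩ : ∃ D : ℂ, D = l1 - l2 := ⟨_, rfl⟩
    have hsD : s^2 - D^2 = 4*p := by rw [hD_def, ← hsum, ← hprod]; ring
    have hsqD : Complex.abs D ^ 2 = normSq D := Complex.sq_abs D
    have hDnn : 0 ≤ Complex.abs D := Complex.abs.nonneg D
    rcases le_or_gt (2*m) (Complex.abs D) with hcase | hcase
    · -- Case I : 2m ≤ |D|
      have h4m : 4*m^2 ≤ normSq D := by nlinarith
      have hnD0 : 0 < normSq D := by nlinarith
      obtain ⟨e, he_def⟩ : ∃ e : ℝ, e = m^2 / normSq D := ⟨_, rfl⟩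
      have he : e * normSq D = m^2 := by rw [he_def]; field_simp
      have he0 : 0 < e := by rw [he_def]; positivity
      have h4e : 4*e ≤ 1 := by nlinarith
      obtain ⟨t, ht_def⟩ : ∃ t : ℝ, t = Real.sqrt (1 - 4*e) := ⟨_, rfl⟩
      have ht2 : t^2 = 1 - 4*e := by rw [ht_def]; exact Real.sq_sqrt (by linarith)
      obtain ⟨β1, hβ1⟩ : ∃ b : ℂ, b = (s + D*(t:ℂ))/2 := ⟨_, rfl⟩
      obtain ⟨β2, hβ2⟩ : ∃ b : ℂ, b = (s - D*(t:ℂ))/2 := ⟨_, rfl⟩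
      obtain ⟨c, hc⟩ : ∃ c : ℂ, c = (e:ℂ)*D^2/a := ⟨_, rfl⟩
      have hca : c*a = (e:ℂ)*D^2 := by rw [hc]; exact div_mul_cancel₀ _ ha
      have htc : ((t:ℂ))^2 = ((1-4*e : ℝ):ℂ) := by rw [← Complex.ofReal_pow, ht2]
      have hβprod : β1*β2 = (s^2 - D^2*((1-4*e:ℝ):ℂ))/4 := by
        rw [hβ1, hβ2, ← htc]; ring
      have hdet : β1*β2 - c*a = p := by
        rw [hβprod, hca]; push_cast; linear_combination (1/4)*hsD
      have hm2ne : (m:ℝ)^2 ≠ 0 := by positivity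
      have hnsqc : normSq c = m^2 := by
        rw [hc, normSq_div, normSq_mul, Complex.normSq_ofReal, hnA,
          show normSq (D^2) = (normSq D)^2 from map_pow normSq D 2]
        rw [div_eq_iff hm2ne]
        linear_combination (e*normSq D + m^2)*he
      have hnsqd : normSq (D*(t:ℂ)) = normSq D - 4*m^2 := by
        rw [normSq_mul, Complex.normSq_ofReal, show t*t = t^2 by ring, ht2]
        linear_combination (-4)*he
      have hβsum : normSq β1 + normSq β2 = (normSq s + normSq (D*(t:ℂ)))/2 := by
        rw [hβ1, hβ2]; exact para_half s (D*(t:ℂ))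
      have hpara2 : normSq s + normSq D = 2*(normSq l1 + normSq l2) := by
        rw [← hsum, hD_def]; exact para_two l1 l2
      have hTsum : normSq β1 + normSq c + normSq a + normSq β2 = normSq l1 + normSq l2 := by
        rw [hnsqd] at hβsum
        rw [hnsqc, hnA]
        linarith [hβsum, hpara2]
      refine ⟨!![β1, c; a, β2], ?_, by simp, ?_, ?_⟩
      · apply matrix_norm_le
        · rw [hTsum, hdet]; exact hT0
        · rw [hTsum]; linarith
      · rw [show (!![β1, c; a, β2] : Matrix (Fin 2) (Fin 2) ℂ) 0 0 = β1 by simp,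
          show (!![β1, c; a, β2] : Matrix (Fin 2) (Fin 2) ℂ) 1 1 = β2 by simp, hβ1, hβ2]
        ring
      · rw [show (!![β1, c; a, β2] : Matrix (Fin 2) (Fin 2) ℂ) 0 0 = β1 by simp,
          show (!![β1, c; a, β2] : Matrix (Fin 2) (Fin 2) ℂ) 1 1 = β2 by simp,
          show (!![β1, c; a, β2] : Matrix (Fin 2) (Fin 2) ℂ) 0 1 = c by simp,
          show (!![β1, c; a, β2] : Matrix (Fin 2) (Fin 2) ℂ) 1 0 = a by simp]
        exact hdet.symm
    · -- Case II : |D| < 2m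
      obtain ⟨c, hc⟩ : ∃ c : ℂ, c = D^2/(4*a) := ⟨_, rfl⟩
      have hca : c*a = D^2/4 := by rw [hc]; field_simp
      have hdet : (s/2)*(s/2) - c*a = p := by rw [hca]; linear_combination (1/4)*hsD
      have hnsq4 : normSq (4*a) = 16*m^2 := by
        rw [normSq_mul, hnA, show normSq (4:ℂ) = 16 by norm_num [Complex.normSq_apply]]
      have hnsqc : normSq c = (normSq D)^2/(16*m^2) := by
        rw [hc, normSq_div, hnsq4, show normSq (D^2) = (normSq D)^2 from map_pow normSq D 2]
      have hs2 : normSq (s/2) = normSq s/4 := by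
        rw [normSq_div]; norm_num [Complex.normSq_apply]
      obtain ⟨k, hk_def⟩ : ∃ k : ℝ, k = Complex.abs (1 - l1*conj l2) := ⟨_, rfl⟩
      obtain ⟨g, hg_def⟩ : ∃ g : ℝ,
        g = Real.sqrt ((1 - Complex.abs l1^2)*(1 - Complex.abs l2^2)) := ⟨_, rfl⟩
      have hg2 : g^2 = (1 - normSq l1)*(1 - normSq l2) := by
        rw [hg_def, Real.sq_sqrt (by nlinarith [Complex.sq_abs l1, Complex.sq_abs l2]),
          Complex.sq_abs, Complex.sq_abs]
      have hg0 : 0 ≤ g := hg_def ▸ Real.sqrt_nonneg _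
      have hk0 : 0 ≤ k := hk_def ▸ Complex.abs.nonneg _
      have hk2 : k^2 = g^2 + normSq D := by
        rw [hk_def, Complex.sq_abs, hex_identity, hg2, hD_def]
      have H' : ∀ z : ℂ, Complex.abs z < 1 →
          m * (1 - Complex.abs z^2) ≤ Complex.abs ((1 - l1*z)*(1 - l2*z)) := by
        intro z hz
        rw [hm_def]; exact H z hz
      have hkc : 2*m ≤ k + g := by
        rw [hk_def, hg_def]; exact key_closed l1 l2 hl1 hl2 m (le_of_lt hm0') H'
      have hQ : normSq D < 4*m^2 := by nlinarith
      have hsq4 : 4*m^2 ≤ (k+g)^2 := by nlinarith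
      have hkg0 : 0 < k+g := by linarith
      have hX : 4*m^2*(k-g) ≤ normSq D*(k+g) := by
        apply le_of_mul_le_mul_right _ hkg0
        have hid : (4*m^2*(k-g))*(k+g) = (4*m^2)*normSq D := by linear_combination 4*m^2*hk2
        rw [hid]
        calc (4*m^2)*normSq D ≤ (k+g)^2*normSq D :=
          mul_le_mul_of_nonneg_right hsq4 (normSq_nonneg D)
        _ = normSq D*(k+g)*(k+g) := by ring
      have hstar := mul_le_mul_of_nonneg_left hX (by linarith : (0:ℝ) ≤ 2*g)
      have hexp : (k+g)^2 - 4*m^2 = 2*g^2 + normSq D + 2*k*g - 4*m^2 := by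
        linear_combination hk2
      have hA : (0:ℝ) ≤ (2*g^2 + normSq D + 2*k*g - 4*m^2)*(4*m^2 - normSq D) := by
        rw [← hexp]; exact mul_nonneg (by linarith) (by linarith)
      have h16 : 16*m^4 + (normSq D)^2 ≤ 16*m^2*g^2 + 8*m^2*normSq D := by
        nlinarith [hA, hstar]
      have hRid : 1 + normSq p - normSq s/2 = g^2 + normSq D/2 := by
        rw [hnp, ← hsum, hD_def, hg2]
        simp only [Complex.normSq_apply, Complex.add_re, Complex.add_im,
          Complex.sub_re, Complex.sub_im]
        ring
      have hnum : m^2 + (normSq D)^2/(16*m^2) ≤ g^2 + normSq D/2 := by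
        have hd : (normSq D)^2/(16*m^2) ≤ g^2 + normSq D/2 - m^2 := by
          rw [div_le_iff₀ (by positivity : (0:ℝ) < 16*m^2)]
          nlinarith [h16]
        linarith
      have hT1 : normSq (s/2) + normSq c + normSq a + normSq (s/2)
          ≤ 1 + normSq ((s/2)*(s/2) - c*a) := by
        rw [hdet, hs2, hnsqc, hnA]; linarith [hRid, hnum]
      have hT2 : normSq (s/2) + normSq c + normSq a + normSq (s/2) ≤ 2 := by
        rw [hs2, hnsqc, hnA]; linarith [hRid, hnum, hp1]
      refine ⟨!![s/2, c; a, s/2], matrix_norm_le _ _ _ _ hT1 hT2, by simp, ?_, ?_⟩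
      · rw [show (!![s/2, c; a, s/2] : Matrix (Fin 2) (Fin 2) ℂ) 0 0 = s/2 by simp,
          show (!![s/2, c; a, s/2] : Matrix (Fin 2) (Fin 2) ℂ) 1 1 = s/2 by simp]
        ring
      · rw [show (!![s/2, c; a, s/2] : Matrix (Fin 2) (Fin 2) ℂ) 0 0 = s/2 by simp,
          show (!![s/2, c; a, s/2] : Matrix (Fin 2) (Fin 2) ℂ) 1 1 = s/2 by simp,
          show (!![s/2, c; a, s/2] : Matrix (Fin 2) (Fin 2) ℂ) 0 1 = c by simp,
          show (!![s/2, c; a, s/2] : Matrix (Fin 2) (Fin 2) ℂ) 1 0 = a by simp]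
        exact hdet.symm

/-! ### Membership lemmas for the hexablock -/

lemma hex_mem_biball1 {w : ℂ × ℂ × ℂ × ℂ} (hw : w ∈ closedHexablock) :
    (w.1, w.2.1) ∈ closedBiball := by
  obtain ⟨⟨h1, h2⟩, hineq⟩ := hw
  simp only [Complex.norm_eq_abs] at h1 h2 hineq
  show Complex.abs w.1 ^ 2 + Complex.abs w.2.1 ^ 2 ≤ 1
  apply biball_aux _ _ h1
  intro z hz
  have key := hineq z 0 hz (by simp)
  have h0 : Complex.abs (0:ℂ) = 0 := map_zero _
  rw [h0] at key
  norm_num at key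
  exact key

lemma hex_mem_biball2 {w : ℂ × ℂ × ℂ × ℂ} (hw : w ∈ closedHexablock) :
    (w.1, w.2.2.1) ∈ closedBiball := by
  obtain ⟨⟨h1, h2⟩, hineq⟩ := hw
  simp only [Complex.norm_eq_abs] at h1 h2 hineq
  obtain ⟨h2le, h3le, -⟩ := tetra_facts w.2.1 w.2.2.1 w.2.2.2 h1 h2
  show Complex.abs w.1 ^ 2 + Complex.abs w.2.2.1 ^ 2 ≤ 1
  apply biball_aux _ _ h2le
  intro z hz
  have key := hineq 0 z (by simp) hz
  have h0 : Complex.abs (0:ℂ) = 0 := map_zero _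
  rw [h0] at key
  norm_num at key
  exact key

set_option maxHeartbeats 1000000 in
lemma hex_mem_penta {w : ℂ × ℂ × ℂ × ℂ} (hw : w ∈ closedHexablock) :
    (w.1, w.2.1 + w.2.2.1, w.2.2.2) ∈ closedPentablock := by
  obtain ⟨a, x1, x2, x3⟩ := w
  obtain ⟨⟨ht1, ht2⟩, hineq⟩ := hw
  simp only at ht1 ht2 hineq ⊢
  simp only [Complex.norm_eq_abs] at ht1 ht2 hineq
  obtain ⟨h2le, h3le, hGam⟩ := tetra_facts x1 x2 x3 ht1 ht2
  obtain ⟨d, hd⟩ : ∃ d : ℂ, d^2 = (x1+x2)^2 - 4*x3 :=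
    IsAlgClosed.exists_pow_nat_eq _ two_pos
  obtain ⟨l1, hl1_def⟩ : ∃ l : ℂ, l = ((x1+x2)+d)/2 := ⟨_, rfl⟩
  obtain ⟨l2, hl2_def⟩ : ∃ l : ℂ, l = ((x1+x2)-d)/2 := ⟨_, rfl⟩
  have hsum : l1 + l2 = x1 + x2 := by rw [hl1_def, hl2_def]; ring
  have hprod : l1 * l2 = x3 := by
    rw [hl1_def, hl2_def]
    linear_combination (-(1:ℂ)/4)*hd
  have habs_s : Complex.abs (l1+l2) ≤ 2 := by
    rw [hsum]
    calc Complex.abs (x1+x2) ≤ Complex.abs x1 + Complex.abs x2 := Complex.abs.add_le _ _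
    _ ≤ 2 := by linarith
  have habs_p : Complex.abs l1 * Complex.abs l2 ≤ 1 := by
    rw [← map_mul, hprod]; exact h3le
  have hG' : Complex.abs ((l1+l2) - (starRingEnd ℂ) (l1+l2)*(l1*l2))
      ≤ 1 - (Complex.abs l1 * Complex.abs l2)^2 := by
    rw [← map_mul, hsum, hprod]
    exact hGam
  have hl1d : Complex.abs l1 ≤ 1 := root_in_disc l1 l2 habs_p habs_s hG'
  have hl2d : Complex.abs l2 ≤ 1 := by
    apply root_in_disc l2 l1
    · rw [mul_comm]; exact habs_p
    · rw [add_comm]; exact habs_s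
    · rw [add_comm l2 l1, mul_comm l2 l1, mul_comm (Complex.abs l2) (Complex.abs l1)]
      exact hG'
  have H : ∀ z : ℂ, Complex.abs z < 1 →
      Complex.abs a * (1 - Complex.abs z^2) ≤ Complex.abs ((1 - l1*z)*(1 - l2*z)) := by
    intro z hz
    have key := hineq z z hz hz
    have hsqrt : Real.sqrt ((1 - Complex.abs z ^ 2) * (1 - Complex.abs z ^ 2))
        = 1 - Complex.abs z ^ 2 := by
      rw [Real.sqrt_mul_self (by nlinarith [Complex.abs.nonneg z])]
    rw [hsqrt] at key
    have hexpand : (1 - l1*z)*(1 - l2*z) = 1 - x1*z - x2*z + x3*z*z := by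
      linear_combination (z*z)*hprod - z*hsum
    rw [hexpand]
    exact key
  obtain ⟨b, hb, hab, hsb, hpb⟩ := penta_realize a (x1+x2) x3 l1 l2 hsum hprod hl1d hl2d H
  exact ⟨b, hb, by rw [hab, hsb, hpb]⟩

/-! ### Sup comparison lemmas -/

lemma hex_zero_mem : ((0,0,0,0) : ℂ × ℂ × ℂ × ℂ) ∈ closedHexablock := by
  refine ⟨⟨?_, ?_⟩, ?_⟩
  · show Complex.abs 0 ≤ 1
    simp
  · show (0:ℝ) ≤ 1 + Complex.abs (0:ℂ) ^2 - Complex.abs (0:ℂ) ^2 - Complex.abs (0:ℂ) ^2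
      - 2 * Complex.abs ((0:ℂ) - (starRingEnd ℂ) 0 * 0)
    simp
  · intro z1 z2 h1 h2
    show Complex.abs (0:ℂ) * Real.sqrt ((1 - Complex.abs z1 ^ 2) * (1 - Complex.abs z2 ^ 2))
      ≤ Complex.abs (1 - 0*z1 - 0*z2 + 0*z1*z2)
    rw [map_zero, zero_mul]
    exact Complex.abs.nonneg _

lemma abs_le_two_of_biball {z : ℂ × ℂ} (hz : z ∈ closedBiball) (i : Fin 2) :
    Complex.abs (![z.1, z.2] i) ≤ 2 := by
  have h := hz
  simp only [closedBiball, Set.mem_setOf_eq, Complex.norm_eq_abs] at h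
  fin_cases i <;> simp <;>
    nlinarith [Complex.abs.nonneg z.1, Complex.abs.nonneg z.2, sq_nonneg (Complex.abs z.1),
      sq_nonneg (Complex.abs z.2)]

lemma biball_bdd (q : MvPolynomial (Fin 2) ℂ) :
    BddAbove ((fun z : ℂ × ℂ =>
      Complex.abs (MvPolynomial.eval ![z.1, z.2] q)) '' closedBiball) := by
  refine ⟨∑ d ∈ q.support, Complex.abs (coeff d q) * ∏ i ∈ d.support, (2:ℝ) ^ d i, ?_⟩
  rintro r ⟨z, hz, rfl⟩
  exact eval_bound q _ (abs_le_two_of_biball hz)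

lemma tetra_bdd (q : MvPolynomial (Fin 3) ℂ) :
    BddAbove ((fun x : ℂ × ℂ × ℂ =>
      Complex.abs (MvPolynomial.eval ![x.1, x.2.1, x.2.2] q)) '' closedTetrablock) := by
  refine ⟨∑ d ∈ q.support, Complex.abs (coeff d q) * ∏ i ∈ d.support, (2:ℝ) ^ d i, ?_⟩
  rintro r ⟨x, hx, rfl⟩
  apply eval_bound
  obtain ⟨h1, h2⟩ := hx
  simp only [Complex.norm_eq_abs] at h1 h2
  obtain ⟨h2le, h3le, -⟩ := tetra_facts x.1 x.2.1 x.2.2 h1 h2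
  intro i
  fin_cases i <;> simp <;> linarith

lemma penta_bdd (q : MvPolynomial (Fin 3) ℂ) :
    BddAbove ((fun w : ℂ × ℂ × ℂ =>
      Complex.abs (MvPolynomial.eval ![w.1, w.2.1, w.2.2] q)) '' closedPentablock) := by
  refine ⟨∑ d ∈ q.support, Complex.abs (coeff d q) * ∏ i ∈ d.support, (2:ℝ) ^ d i, ?_⟩
  rintro r ⟨x, hx, rfl⟩
  apply eval_bound
  obtain ⟨b, hb, rfl⟩ := hx
  have h00 := entry_bound b hb 0 0
  have h01 := entry_bound b hb 0 1
  have h10 := entry_bound b hb 1 0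
  have h11 := entry_bound b hb 1 1
  intro i
  fin_cases i
  · simpa using by linarith
  · simp only [Matrix.cons_val_one, Matrix.head_cons]
    calc Complex.abs (b 0 0 + b 1 1) ≤ Complex.abs (b 0 0) + Complex.abs (b 1 1) :=
      Complex.abs.add_le _ _
    _ ≤ 2 := by linarith
  · show Complex.abs (b 0 0 * b 1 1 - b 0 1 * b 1 0) ≤ 2
    calc Complex.abs (b 0 0 * b 1 1 - b 0 1 * b 1 0)
        ≤ Complex.abs (b 0 0 * b 1 1) + Complex.abs (b 0 1 * b 1 0) := by
          simpa [Complex.norm_eq_abs] using norm_sub_le (b 0 0 * b 1 1) (b 0 1 * b 1 0)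
    _ ≤ 2 := by
        rw [map_mul, map_mul]
        nlinarith [Complex.abs.nonneg (b 0 0), Complex.abs.nonneg (b 0 1),
          Complex.abs.nonneg (b 1 0), Complex.abs.nonneg (b 1 1)]

end Aux

/-! ### The main theorem -/

open MvPolynomial in
set_option maxHeartbeats 2000000 in
set_option synthInstance.maxHeartbeats 1000000 in
/-- If `(A, X₁, X₂, X₃)` is an `ℍ`-contraction, then `(A, X₁)` and `(A, X₂)`
are `𝔹₂`-contractions, `(X₁, X₂, X₃)` is an `𝔼`-contraction and
`(A, X₁ + X₂, X₃)` is a `ℙ`-contraction. -/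
theorem H_contraction_implies_biball_tetra_penta
    (A X₁ X₂ X₃ : H →L[ℂ] H)
    (hc01 : Commute A X₁) (hc02 : Commute A X₂) (hc03 : Commute A X₃)
    (hc12 : Commute X₁ X₂) (hc13 : Commute X₁ X₃) (hc23 : Commute X₂ X₃)
    (hvN : ∀ p : MvPolynomial (Fin 4) ℂ, ‖evalOp4 A X₁ X₂ X₃ p‖ ≤ hexPolySup p) :
    ((∀ q : MvPolynomial (Fin 2) ℂ, ‖evalOp2 A X₁ q‖ ≤ biballPolySup q) ∧
      (∀ q : MvPolynomial (Fin 2) ℂ, ‖evalOp2 A X₂ q‖ ≤ biballPolySup q)) ∧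
    (∀ q : MvPolynomial (Fin 3) ℂ, ‖evalOp3 X₁ X₂ X₃ q‖ ≤ tetraPolySup q) ∧
    (∀ q : MvPolynomial (Fin 3) ℂ, ‖evalOp3 A (X₁ + X₂) X₃ q‖ ≤ pentaPolySup q) := by
  classical
  set s4 : Set (H →L[ℂ] H) := {A, X₁, X₂, X₃} with hs4
  have hAmem : A ∈ s4 := by simp [hs4]
  have hX1mem : X₁ ∈ s4 := by simp [hs4]
  have hX2mem : X₂ ∈ s4 := by simp [hs4]
  have hX3mem : X₃ ∈ s4 := by simp [hs4]
  have hcomm : ∀ x ∈ s4, ∀ y ∈ s4, x*y = y*x := by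
    intro x hx y hy
    simp only [hs4, Set.mem_insert_iff, Set.mem_singleton_iff] at hx hy
    rcases hx with rfl | rfl | rfl | rfl <;> rcases hy with rfl | rfl | rfl | rfl
    all_goals first
      | rfl
      | exact hc01.eq | exact hc01.symm.eq
      | exact hc02.eq | exact hc02.symm.eq
      | exact hc03.eq | exact hc03.symm.eq
      | exact hc12.eq | exact hc12.symm.eq
      | exact hc13.eq | exact hc13.symm.eq
      | exact hc23.eq | exact hc23.symm.eq
  letI : CommSemiring ↥(Algebra.adjoin ℂ s4) := Algebra.adjoinCommSemiringOfComm ℂ hcomm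
  let A' : ↥(Algebra.adjoin ℂ s4) := ⟨A, Algebra.subset_adjoin hAmem⟩
  let X₁' : ↥(Algebra.adjoin ℂ s4) := ⟨X₁, Algebra.subset_adjoin hX1mem⟩
  let X₂' : ↥(Algebra.adjoin ℂ s4) := ⟨X₂, Algebra.subset_adjoin hX2mem⟩
  let X₃' : ↥(Algebra.adjoin ℂ s4) := ⟨X₃, Algebra.subset_adjoin hX3mem⟩
  have coe_aeval : ∀ {n : ℕ} (v : Fin n → ↥(Algebra.adjoin ℂ s4)) (q : MvPolynomial (Fin n) ℂ),
      ((MvPolynomial.aeval v q : ↥(Algebra.adjoin ℂ s4)) : H →L[ℂ] H)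
        = ∑ d ∈ q.support, MvPolynomial.coeff d q
            • (((∏ i, v i ^ d i : ↥(Algebra.adjoin ℂ s4))) : H →L[ℂ] H) := by
    intro n v q
    rw [MvPolynomial.aeval_def, MvPolynomial.eval₂_eq', AddSubmonoidClass.coe_finset_sum]
    apply Finset.sum_congr rfl
    intro d _
    rw [MulMemClass.coe_mul]
    rw [show ((algebraMap ℂ ↥(Algebra.adjoin ℂ s4) (coeff d q) : ↥(Algebra.adjoin ℂ s4)) : H →L[ℂ] H)
      = algebraMap ℂ (H →L[ℂ] H) (coeff d q) from rfl]
    rw [← Algebra.smul_def]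
  -- bridges
  have bridge4 : ∀ p : MvPolynomial (Fin 4) ℂ,
      evalOp4 A X₁ X₂ X₃ p = ((aeval ![A', X₁', X₂', X₃'] p : ↥(Algebra.adjoin ℂ s4)) : H →L[ℂ] H) := by
    intro p
    rw [coe_aeval]
    apply Finset.sum_congr rfl
    intro d _
    congr 1
  have bridge2a : ∀ q : MvPolynomial (Fin 2) ℂ,
      evalOp2 A X₁ q = ((aeval ![A', X₁'] q : ↥(Algebra.adjoin ℂ s4)) : H →L[ℂ] H) := by
    intro q
    rw [coe_aeval]
    apply Finset.sum_congr rfl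
    intro d _
    congr 1
  have bridge2b : ∀ q : MvPolynomial (Fin 2) ℂ,
      evalOp2 A X₂ q = ((aeval ![A', X₂'] q : ↥(Algebra.adjoin ℂ s4)) : H →L[ℂ] H) := by
    intro q
    rw [coe_aeval]
    apply Finset.sum_congr rfl
    intro d _
    congr 1
  have bridge3t : ∀ q : MvPolynomial (Fin 3) ℂ,
      evalOp3 X₁ X₂ X₃ q = ((aeval ![X₁', X₂', X₃'] q : ↥(Algebra.adjoin ℂ s4)) : H →L[ℂ] H) := by
    intro q
    rw [coe_aeval]
    apply Finset.sum_congr rfl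
    intro d _
    congr 1
  have bridge3p : ∀ q : MvPolynomial (Fin 3) ℂ,
      evalOp3 A (X₁ + X₂) X₃ q = ((aeval ![A', X₁' + X₂', X₃'] q : ↥(Algebra.adjoin ℂ s4)) : H →L[ℂ] H) := by
    intro q
    rw [coe_aeval]
    apply Finset.sum_congr rfl
    intro d _
    congr 1
  have hexne : ∀ p : MvPolynomial (Fin 4) ℂ,
      ((fun w : ℂ × ℂ × ℂ × ℂ =>
        Complex.abs (MvPolynomial.eval ![w.1, w.2.1, w.2.2.1, w.2.2.2] p)) ''
          closedHexablock).Nonempty :=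
    fun p => ⟨_, ⟨(0,0,0,0), hex_zero_mem, rfl⟩⟩
  refine ⟨⟨?_, ?_⟩, ?_, ?_⟩
  · -- (A, X₁)
    intro q
    have hop : evalOp2 A X₁ q = evalOp4 A X₁ X₂ X₃ (rename ![0, 1] q) := by
      rw [bridge2a, bridge4, aeval_rename,
        show (![A', X₁', X₂', X₃'] ∘ (![0, 1] : Fin 2 → Fin 4)) = ![A', X₁'] from by
          funext i; fin_cases i <;> rfl]
    rw [hop]
    refine le_trans (hvN _) ?_
    apply csSup_le_csSup (biball_bdd q) (hexne _)
    rintro r ⟨w, hw, rfl⟩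
    refine ⟨(w.1, w.2.1), hex_mem_biball1 hw, ?_⟩
    show Complex.abs (eval ![w.1, w.2.1] q)
      = Complex.abs (eval ![w.1, w.2.1, w.2.2.1, w.2.2.2] (rename ![0, 1] q))
    rw [eval_rename,
      show (![w.1, w.2.1, w.2.2.1, w.2.2.2] ∘ (![0, 1] : Fin 2 → Fin 4)) = ![w.1, w.2.1] from by
        funext i; fin_cases i <;> rfl]
  · -- (A, X₂)
    intro q
    have hop : evalOp2 A X₂ q = evalOp4 A X₁ X₂ X₃ (rename ![0, 2] q) := by
      rw [bridge2b, bridge4, aeval_rename,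
        show (![A', X₁', X₂', X₃'] ∘ (![0, 2] : Fin 2 → Fin 4)) = ![A', X₂'] from by
          funext i; fin_cases i <;> rfl]
    rw [hop]
    refine le_trans (hvN _) ?_
    apply csSup_le_csSup (biball_bdd q) (hexne _)
    rintro r ⟨w, hw, rfl⟩
    refine ⟨(w.1, w.2.2.1), hex_mem_biball2 hw, ?_⟩
    show Complex.abs (eval ![w.1, w.2.2.1] q)
      = Complex.abs (eval ![w.1, w.2.1, w.2.2.1, w.2.2.2] (rename ![0, 2] q))
    rw [eval_rename,
      show (![w.1, w.2.1, w.2.2.1, w.2.2.2] ∘ (![0, 2] : Fin 2 → Fin 4)) = ![w.1, w.2.2.1] from by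
        funext i; fin_cases i <;> rfl]
  · -- tetrablock
    intro q
    have hop : evalOp3 X₁ X₂ X₃ q = evalOp4 A X₁ X₂ X₃ (rename ![1, 2, 3] q) := by
      rw [bridge3t, bridge4, aeval_rename,
        show (![A', X₁', X₂', X₃'] ∘ (![1, 2, 3] : Fin 3 → Fin 4)) = ![X₁', X₂', X₃'] from by
          funext i; fin_cases i <;> rfl]
    rw [hop]
    refine le_trans (hvN _) ?_
    apply csSup_le_csSup (tetra_bdd q) (hexne _)
    rintro r ⟨w, hw, rfl⟩
    refine ⟨(w.2.1, w.2.2.1, w.2.2.2), hw.1, ?_⟩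
    show Complex.abs (eval ![w.2.1, w.2.2.1, w.2.2.2] q)
      = Complex.abs (eval ![w.1, w.2.1, w.2.2.1, w.2.2.2] (rename ![1, 2, 3] q))
    rw [eval_rename,
      show (![w.1, w.2.1, w.2.2.1, w.2.2.2] ∘ (![1, 2, 3] : Fin 3 → Fin 4))
          = ![w.2.1, w.2.2.1, w.2.2.2] from by
        funext i; fin_cases i <;> rfl]
  · -- pentablock
    intro q
    have hop : evalOp3 A (X₁ + X₂) X₃ q
        = evalOp4 A X₁ X₂ X₃ (bind₁ ![X 0, X 1 + X 2, X 3] q) := by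
      rw [bridge3p, bridge4, aeval_bind₁,
        show (fun i => aeval ![A', X₁', X₂', X₃']
            ((![X 0, X 1 + X 2, X 3] : Fin 3 → MvPolynomial (Fin 4) ℂ) i))
          = ![A', X₁' + X₂', X₃'] from by
          funext i; fin_cases i <;> simp]
    rw [hop]
    refine le_trans (hvN _) ?_
    apply csSup_le_csSup (penta_bdd q) (hexne _)
    rintro r ⟨w, hw, rfl⟩
    refine ⟨(w.1, w.2.1 + w.2.2.1, w.2.2.2), hex_mem_penta hw, ?_⟩
    show Complex.abs (eval ![w.1, w.2.1 + w.2.2.1, w.2.2.2] q)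
      = Complex.abs (eval ![w.1, w.2.1, w.2.2.1, w.2.2.2] (bind₁ ![X 0, X 1 + X 2, X 3] q))
    have hb : eval ![w.1, w.2.1, w.2.2.1, w.2.2.2] (bind₁ ![X 0, X 1 + X 2, X 3] q)
        = eval (fun i => eval ![w.1, w.2.1, w.2.2.1, w.2.2.2] ((![X 0, X 1 + X 2, X 3] :
            Fin 3 → MvPolynomial (Fin 4) ℂ) i)) q :=
      eval₂Hom_bind₁ _ _ _ _
    rw [hb,
      show (fun i => eval ![w.1, w.2.1, w.2.2.1, w.2.2.2] ((![X 0, X 1 + X 2, X 3] :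
            Fin 3 → MvPolynomial (Fin 4) ℂ) i)) = ![w.1, w.2.1 + w.2.2.1, w.2.2.2] from by
        funext i; fin_cases i <;> simp]
end
end

section
/- Let N₁, N₂, N₃ be pairwise commuting bounded normal operators on a complex Hilbert space H with N₃ unitary, N₁ = N₂*·N₃ and ‖N₁‖ ≤ 1 (an 𝔼-unitary), and let D_{N₁} = (I − N₁*·N₁)^{1/2}. Then D_{N₁} commutes with N₁, N₂ and N₃, and the quadruple (D_{N₁}, N₁, N₂, N₃) is an ℍ-unitary: its four entries are pairwise commuting normal operators with N₃ unitary, N₁ = N₂*·N₃, ‖N₁‖ ≤ 1 and (D_{N₁})*·D_{N₁} + N₁*·N₁ = I. Conversely, if (D_{N₁}, N₁, N₂, N₃) is an ℍ-unitary then (N₁, N₂, N₃) is an 𝔼-unitary. -/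
open scoped NNReal

lemma my_commute_cfc {H : Type*} [NormedAddCommGroup H] [InnerProductSpace ℂ H]
    [CompleteSpace H] (a b : H →L[ℂ] H) (ha : IsSelfAdjoint a) (hab : Commute b a)
    (f : ℝ → ℝ) : Commute b (cfc f a) := by
  by_cases hf : ContinuousOn f (spectrum ℝ a)
  · rw [cfc_apply f a ha hf]
    let φ := cfcHom (R := ℝ) ha
    have hφ : Continuous φ := (cfcHom_isClosedEmbedding ha).continuous
    let C : Subalgebra ℝ (H →L[ℂ] H) := Subalgebra.centralizer ℝ {b}
    have hCset : (C : Set (H →L[ℂ] H)) = {x | b * x = x * b} := by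
      ext x
      simp only [C, SetLike.mem_coe, Subalgebra.mem_centralizer_iff, Set.mem_singleton_iff,
        forall_eq, Set.mem_setOf_eq]
    have hCclosed : IsClosed (C : Set (H →L[ℂ] H)) := by
      rw [hCset]
      exact isClosed_eq (continuous_mul_left b) (continuous_mul_right b)
    set T : Subalgebra ℝ C(spectrum ℝ a, ℝ) := C.comap (φ : C(spectrum ℝ a, ℝ) →⋆ₐ[ℝ] (H →L[ℂ] H)).toAlgHom with hT
    have hTclosed : IsClosed (T : Set C(spectrum ℝ a, ℝ)) := by
      have : (T : Set C(spectrum ℝ a, ℝ)) = φ ⁻¹' (C : Set (H →L[ℂ] H)) := rfl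
      rw [this]
      exact hCclosed.preimage hφ
    have hP : polynomialFunctions (spectrum ℝ a) ≤ T := by
      rw [polynomialFunctions.eq_adjoin_X, Algebra.adjoin_le_iff]
      rintro g hg
      simp only [Set.mem_singleton_iff] at hg
      subst hg
      have hX : φ ((Polynomial.toContinuousMapOnAlgHom (spectrum ℝ a)) Polynomial.X) = a := by
        have heq : (Polynomial.toContinuousMapOnAlgHom (spectrum ℝ a)) Polynomial.X
            = (ContinuousMap.id ℝ).restrict (spectrum ℝ a) := by
          ext x
          simp
        rw [heq]
        exact cfcHom_id ha
      rw [SetLike.mem_coe, hT, Subalgebra.mem_comap]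
      show φ _ ∈ C
      rw [hX]
      rw [Subalgebra.mem_centralizer_iff]
      rintro g rfl
      exact hab
    have htop : ∀ g : C(spectrum ℝ a, ℝ), g ∈ T := by
      intro g
      have := polynomialFunctions.topologicalClosure (spectrum ℝ a)
      have h2 : (polynomialFunctions (spectrum ℝ a)).topologicalClosure ≤ T :=
        Subalgebra.topologicalClosure_minimal hP hTclosed
      exact h2 (this ▸ Algebra.mem_top)
    have := htop ⟨_, hf.restrict⟩
    rw [hT, Subalgebra.mem_comap] at this
    have hmem : φ ⟨_, hf.restrict⟩ ∈ C := this
    rw [Subalgebra.mem_centralizer_iff] at hmem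
    exact hmem b rfl
  · rw [cfc_apply_of_not_continuousOn a hf]
    exact Commute.zero_right b

set_option maxHeartbeats 1000000 in
set_option synthInstance.maxHeartbeats 400000 in
lemma commute_of_commute_sq {H : Type*} [NormedAddCommGroup H] [InnerProductSpace ℂ H]
    [CompleteSpace H] (D b : H →L[ℂ] H) (hDpos : D.IsPositive)
    (hb : Commute b (D * D)) : Commute b D := by
  have hsa : IsSelfAdjoint D := hDpos.isSelfAdjoint
  have hD0 : (0 : H →L[ℂ] H) ≤ D := (ContinuousLinearMap.nonneg_iff_isPositive D).mpr hDpos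
  set a := D * D with ha
  have ha0 : 0 ≤ a := by
    have h := star_mul_self_nonneg D
    rwa [hsa.star_eq] at h
  have hasa : IsSelfAdjoint a := by
    show star a = a
    rw [ha, star_mul, hsa.star_eq]
  have hspec : ∀ x ∈ spectrum ℝ a, 0 ≤ x := fun x hx => spectrum_nonneg_of_nonneg ha0 hx
  have hE0 : (0 : H →L[ℂ] H) ≤ cfc Real.sqrt a := cfc_nonneg (fun x _ => Real.sqrt_nonneg x)
  have hEE : cfc Real.sqrt a * cfc Real.sqrt a = a := by
    rw [← cfc_mul Real.sqrt Real.sqrt a]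
    calc cfc (fun x => Real.sqrt x * Real.sqrt x) a
        = cfc (fun x : ℝ => x) a := cfc_congr fun x hx => Real.mul_self_sqrt (hspec x hx)
      _ = a := cfc_id ℝ a
  have h1 : CFC.sqrt a = D := CFC.sqrt_unique ha.symm hD0
  have h2 : CFC.sqrt a = cfc Real.sqrt a := CFC.sqrt_unique hEE hE0
  have hDE : D = cfc Real.sqrt a := by rw [← h1, h2]
  rw [hDE]
  exact my_commute_cfc a b hasa hb Real.sqrt

/-- `(N₁, N₂, N₃)` is an `𝔼`-unitary if and only if `D_{N₁}` (the positive
square root of `I − N₁*N₁`) commutes with `N₁, N₂, N₃` and the quadruple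
`(D_{N₁}, N₁, N₂, N₃)` is an `ℍ`-unitary. -/
theorem E_unitary_iff_defect_H_unitary
    {H : Type*} [NormedAddCommGroup H] [InnerProductSpace ℂ H] [CompleteSpace H]
    (N₁ N₂ N₃ D : H →L[ℂ] H)
    (hc12 : Commute N₁ N₂) (hc13 : Commute N₁ N₃) (hc23 : Commute N₂ N₃)
    (hDpos : D.IsPositive) (hDsq : D * D = 1 - star N₁ * N₁) :
    (IsStarNormal N₁ ∧ IsStarNormal N₂ ∧ IsStarNormal N₃ ∧
      star N₃ * N₃ = 1 ∧ N₃ * star N₃ = 1 ∧ N₁ = star N₂ * N₃ ∧ ‖N₁‖ ≤ 1) ↔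
    (Commute D N₁ ∧ Commute D N₂ ∧ Commute D N₃ ∧
      IsStarNormal D ∧ IsStarNormal N₁ ∧ IsStarNormal N₂ ∧ IsStarNormal N₃ ∧
      star N₃ * N₃ = 1 ∧ N₃ * star N₃ = 1 ∧ N₁ = star N₂ * N₃ ∧ ‖N₁‖ ≤ 1 ∧
      star D * D + star N₁ * N₁ = 1) := by
  constructor
  · rintro ⟨hn1, hn2, hn3, h3a, h3b, heq, hnorm⟩
    have hsa : IsSelfAdjoint D := hDpos.isSelfAdjoint
    have hstar1 : star N₁ = star N₃ * N₂ := by rw [heq, star_mul, star_star]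
    have hu : Commute N₂ (star N₃) := by
      show N₂ * star N₃ = star N₃ * N₂
      calc N₂ * star N₃ = star N₃ * N₃ * (N₂ * star N₃) := by rw [h3a, one_mul]
        _ = star N₃ * (N₃ * N₂ * star N₃) := by simp only [mul_assoc]
        _ = star N₃ * (N₂ * (N₃ * star N₃)) := by rw [← hc23.eq, mul_assoc]
        _ = star N₃ * N₂ := by rw [h3b, mul_one]
    have hc1s : Commute N₁ (star N₁) := hn1.star_comm_self.symm
    have hc2s : Commute N₂ (star N₁) := by
      rw [hstar1]
      exact hu.mul_right (Commute.refl N₂)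
    have hc3s : Commute N₃ (star N₁) := by
      rw [hstar1]
      exact (hn3.star_comm_self.symm).mul_right hc23.symm
    have key : ∀ b, Commute b (star N₁) → Commute b N₁ → Commute b D := by
      intro b hbs hb1
      apply commute_of_commute_sq D b hDpos
      rw [hDsq]
      exact (Commute.one_right b).sub_right (hbs.mul_right hb1)
    refine ⟨(key N₁ hc1s (Commute.refl N₁)).symm, (key N₂ hc2s hc12.symm).symm,
      (key N₃ hc3s hc13.symm).symm, hsa.isStarNormal, hn1, hn2, hn3, h3a, h3b, heq, hnorm, ?_⟩
    rw [hsa.star_eq, hDsq]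
    exact sub_add_cancel 1 (star N₁ * N₁)
  · rintro ⟨_, _, _, _, h5, h6, h7, h8, h9, h10, h11, _⟩
    exact ⟨h5, h6, h7, h8, h9, h10, h11⟩
end
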